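/- arXiv:2511.21016 — 6 statements merged into one kernel-verified Lean document; each statement's English description precedes it below -/
import Mathlib

section
/- The Chebyshev weight sequence is monotonically decreasing and bounded: for every r ≥ 0, 2 = ω₀ ≥ ω₁ ≥ … ≥ ω_r ≥ ω₁* > 1; consequently, 4 − ρ²·ω_i ∈ [2, 4] for all i = 0, 1, …, r. -/
/-- The Chebyshev weight sequence `ω₀ = 2`,
`ω_{i+1} = 4/(4 − ρ²ω_i)` is monotonically decreasing and bounded:
`2 = ω₀ ≥ ω₁ ≥ … ≥ ω₁* > 1`; consequently `4 − ρ²ω_i ∈ [2, 4]` for all `i`. -/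
theorem chebyshev_weights_decreasing_bounded (ρ : ℝ) (hρ : ρ ∈ Set.Ioo (0 : ℝ) 1)
    (ω : ℕ → ℝ) (hω0 : ω 0 = 2)
    (hωrec : ∀ i, ω (i + 1) = 4 / (4 - ρ ^ 2 * ω i)) :
    let ωstar := 2 * (1 - Real.sqrt (1 - ρ ^ 2)) / ρ ^ 2
    (∀ i, ω (i + 1) ≤ ω i) ∧ (∀ i, ωstar ≤ ω i) ∧ 1 < ωstar ∧
      ∀ i, 4 - ρ ^ 2 * ω i ∈ Set.Icc (2 : ℝ) 4 := by
  obtain ⟨hρ0, hρ1⟩ := hρ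
  intro ωstar
  have hρ2 : (0:ℝ) < ρ ^ 2 := by positivity
  have h1 : (0:ℝ) < 1 - ρ ^ 2 := by nlinarith
  set s := Real.sqrt (1 - ρ ^ 2) with hsdef
  have hs0 : 0 < s := Real.sqrt_pos.mpr h1
  have hs2 : s ^ 2 = 1 - ρ ^ 2 := Real.sq_sqrt h1.le
  have hs1 : s < 1 := by nlinarith
  have hωdef : ωstar = 2 * (1 - s) / ρ ^ 2 := rfl
  have hωstar_le2 : ωstar ≤ 2 := by
    rw [hωdef, div_le_iff₀ hρ2]; nlinarith
  have hωstar_gt1 : 1 < ωstar := by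
    rw [hωdef, lt_div_iff₀ hρ2]; nlinarith
  have hfix : ωstar * (2 + 2 * s) = 4 := by
    rw [hωdef]; field_simp; nlinarith
  have hfix2 : ρ ^ 2 * ωstar = 2 - 2 * s := by
    rw [hωdef]; field_simp
  have key : ∀ i, ωstar ≤ ω i ∧ ω i ≤ 2 := by
    intro i
    induction i with
    | zero => rw [hω0]; exact ⟨hωstar_le2, le_refl 2⟩
    | succ n ih =>
      obtain ⟨hl, hu⟩ := ih
      have hωpos : 0 < ω n := by linarith
      have hD : (0:ℝ) < 4 - ρ ^ 2 * ω n := by nlinarith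
      rw [hωrec]
      constructor
      · rw [le_div_iff₀ hD]
        nlinarith [mul_nonneg (le_of_lt (lt_trans one_pos hωstar_gt1)) (sub_nonneg.2 hl)]
      · rw [div_le_iff₀ hD]; nlinarith
  have hdec : ∀ i, ω (i + 1) ≤ ω i := by
    intro i
    obtain ⟨hl, hu⟩ := key i
    have hD : (0:ℝ) < 4 - ρ ^ 2 * ω i := by nlinarith
    rw [hωrec, div_le_iff₀ hD]
    nlinarith [mul_nonneg (sub_nonneg.2 hl) (sub_nonneg.2 hu), hfix, hfix2]
  refine ⟨hdec, fun i => (key i).1, hωstar_gt1, fun i => ?_⟩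
  obtain ⟨hl, hu⟩ := key i
  have hωpos : 0 < ω i := by linarith
  constructor
  · nlinarith
  · nlinarith
end

section
/- Linear convergence of the Chebyshev weights: let κ = L/μ > 1 and ρ = (L−μ)/(L+μ). Then for every i ≥ 1, ω_i − ω₁* ≤ R^i · (ω₀ − ω₁*), where R = ((κ−1)/(κ+1)) · ((√κ − 1)/(√κ + 1)). -/
/-- Linear convergence of the Chebyshev weights: with
`κ = L/μ > 1`, `ρ = (L−μ)/(L+μ)`, for every `i ≥ 1`,
`ω_i − ω₁* ≤ Rⁱ (ω₀ − ω₁*)` where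
`R = ((κ−1)/(κ+1))·((√κ − 1)/(√κ + 1))`. -/
theorem chebyshev_weights_linear_convergence (L μ : ℝ) (hμ : 0 < μ) (hLμ : μ < L)
    (ρ : ℝ) (hρ : ρ = (L - μ) / (L + μ))
    (ω : ℕ → ℝ) (hω0 : ω 0 = 2)
    (hωrec : ∀ i, ω (i + 1) = 4 / (4 - ρ ^ 2 * ω i)) :
    let κ := L / μ
    let ωstar := 2 * (1 - Real.sqrt (1 - ρ ^ 2)) / ρ ^ 2
    let R := ((κ - 1) / (κ + 1)) * ((Real.sqrt κ - 1) / (Real.sqrt κ + 1))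
    ∀ i, 1 ≤ i → ω i - ωstar ≤ R ^ i * (ω 0 - ωstar) := by
  intro κ ωstar R
  have hκ0 : κ = L / μ := rfl
  have hws0 : ωstar = 2 * (1 - Real.sqrt (1 - ρ ^ 2)) / ρ ^ 2 := rfl
  have hR0 : R = ((κ - 1) / (κ + 1)) * ((Real.sqrt κ - 1) / (Real.sqrt κ + 1)) := rfl
  clear_value κ ωstar R
  have hLμ0 : 0 < L + μ := by linarith
  have hρ0 : 0 < ρ := by rw [hρ]; apply div_pos <;> linarith
  have hρ1 : ρ < 1 := by rw [hρ, div_lt_one hLμ0]; linarith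
  have hρ2a : 0 < ρ ^ 2 := by positivity
  have hρ2b : ρ ^ 2 < 1 := by nlinarith
  set s := Real.sqrt (1 - ρ ^ 2) with hsdef
  have hsq : s ^ 2 = 1 - ρ ^ 2 := Real.sq_sqrt (by linarith)
  have hs0 : 0 ≤ s := Real.sqrt_nonneg _
  clear_value s
  have hs1 : s < 1 := by nlinarith
  have h1s : 0 < 1 + s := by linarith
  have hρs : ρ ^ 2 = 1 - s ^ 2 := by linarith
  -- fixed point value
  have hws : ωstar = 2 / (1 + s) := by
    rw [hws0, div_eq_div_iff (ne_of_gt hρ2a) (ne_of_gt h1s)]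
    linear_combination (-2 : ℝ) * hsq
  have hws_pos : 0 < ωstar := by rw [hws]; positivity
  have hws_le2 : ωstar ≤ 2 := by
    rw [hws, div_le_iff₀ h1s]; nlinarith
  -- contraction step
  have step : ∀ i, ωstar ≤ ω i → ω i ≤ 2 →
      ωstar ≤ ω (i+1) ∧ ω (i+1) ≤ 2 ∧ ω (i+1) - ωstar ≤ (1-s) * (ω i - ωstar) := by
    intro i h1 h2
    have hwnn : 0 ≤ ω i := le_trans hws_pos.le h1
    have hd : 2 ≤ 4 - ρ ^ 2 * ω i := by nlinarith
    have hdpos : 0 < 4 - ρ ^ 2 * ω i := by linarith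
    have hsa : 2 ≤ (1 + s) * ω i := by
      have h := mul_le_mul_of_nonneg_left h1 h1s.le
      rw [hws] at h
      have e : (1 + s) * (2 / (1 + s)) = 2 := by field_simp
      linarith [h, e]
    rw [hωrec i]
    refine ⟨?_, ?_, ?_⟩
    · rw [hws, div_le_div_iff₀ h1s hdpos, hρs]
      nlinarith [mul_nonneg (by linarith : (0:ℝ) ≤ 1 - s)
        (by linarith : (0:ℝ) ≤ (1+s) * ω i - 2)]
    · rw [div_le_iff₀ hdpos]; linarith
    · rw [hws]
      have e : (1 + s) * (2 / (1 + s)) = 2 := by field_simp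
      have hrhs : (1-s) * (ω i - 2/(1+s)) = ((1-s) * ((1+s) * ω i - 2)) / (1+s) := by
        rw [eq_div_iff (ne_of_gt h1s)]; linear_combination (s - 1) * e
      rw [hrhs, div_sub_div _ _ (ne_of_gt hdpos) (ne_of_gt h1s),
        div_le_div_iff₀ (by positivity) h1s, hρs]
      nlinarith [mul_nonneg (mul_nonneg (mul_nonneg h1s.le
        (by linarith : (0:ℝ) ≤ 1 - s)) (by linarith : (0:ℝ) ≤ (1+s) * ω i - 2))
        (by rw [hρs] at hd; linarith : (0:ℝ) ≤ (4 - (1 - s^2) * ω i) - 2)]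
  -- induction
  have key : ∀ i, ωstar ≤ ω i ∧ ω i ≤ 2 ∧ ω i - ωstar ≤ (1-s) ^ i * (2 - ωstar) := by
    intro i
    induction i with
    | zero =>
      refine ⟨by rw [hω0]; exact hws_le2, le_of_eq hω0, by rw [hω0]; simp⟩
    | succ n ih =>
      obtain ⟨ih1, ih2, ih3⟩ := ih
      obtain ⟨g1, g2, g3⟩ := step n ih1 ih2
      refine ⟨g1, g2, ?_⟩
      calc ω (n+1) - ωstar ≤ (1-s) * (ω n - ωstar) := g3
        _ ≤ (1-s) * ((1-s)^n * (2 - ωstar)) :=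
            mul_le_mul_of_nonneg_left ih3 (by linarith)
        _ = (1-s)^(n+1) * (2 - ωstar) := by ring
  -- R = 1 - s
  have hκ1 : 1 < κ := by rw [hκ0, lt_div_iff₀ hμ]; linarith
  set t := Real.sqrt κ with htdef
  have ht2 : t ^ 2 = κ := Real.sq_sqrt (by linarith)
  have ht0 : 0 ≤ t := Real.sqrt_nonneg _
  clear_value t
  have ht1 : 1 < t := by nlinarith
  have hκne : κ + 1 ≠ 0 := by linarith
  have hρκ : ρ = (κ - 1) / (κ + 1) := by
    rw [hρ, hκ0]
    rw [div_eq_div_iff (ne_of_gt hLμ0) (by rw [hκ0] at hκne; exact hκne)]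
    have hc : L / μ * μ = L := div_mul_cancel₀ L (ne_of_gt hμ)
    linear_combination (-2 : ℝ) * hc
  have h1ρ2 : 1 - ρ ^ 2 = (2 * t / (κ + 1)) ^ 2 := by
    rw [hρκ, ← ht2]
    have h2 : t ^ 2 + 1 ≠ 0 := by positivity
    field_simp
    ring
  have hsval : s = 2 * t / (κ + 1) := by
    rw [hsdef, h1ρ2, Real.sqrt_sq (by positivity)]
  have hR : R = 1 - s := by
    rw [hR0, hsval, ← ht2]
    have h1 : t + 1 ≠ 0 := by linarith
    have h2 : t ^ 2 + 1 ≠ 0 := by positivity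
    field_simp
    ring
  intro i _
  rw [hR, hω0]
  exact (key i).2.2
end

section
/- With ρ = (κ−1)/(κ+1), the lower fixed point satisfies ω₁* = 2(1 − √(1 − ρ²))/ρ² = 2(κ+1)/(1 + √κ)²; the function κ ↦ 2(κ+1)/(1 + √κ)² is strictly increasing on (1, ∞); and for every κ ≥ 10, ω₁* ≥ 5/4, so that all Chebyshev weights satisfy ω_i − 1 ∈ [1/4, 1] for i ≥ 1. -/
set_option maxHeartbeats 1600000 in
/-- With `ρ = (κ−1)/(κ+1)`, the lower fixed point satisfies
`ω₁* = 2(1 − √(1 − ρ²))/ρ² = 2(κ+1)/(1 + √κ)²`; the function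
`κ ↦ 2(κ+1)/(1 + √κ)²` is strictly increasing on `(1, ∞)`; and for `κ ≥ 10`
one has `ω₁* ≥ 5/4`, so that all Chebyshev weights satisfy
`ω_i − 1 ∈ [1/4, 1]` for `i ≥ 1`. -/
theorem chebyshev_lower_fixed_point_properties (κ : ℝ) (hκ : 1 < κ)
    (ρ : ℝ) (hρ : ρ = (κ - 1) / (κ + 1))
    (ω : ℕ → ℝ) (hω0 : ω 0 = 2)
    (hωrec : ∀ i, ω (i + 1) = 4 / (4 - ρ ^ 2 * ω i)) :
    let ωstar := 2 * (1 - Real.sqrt (1 - ρ ^ 2)) / ρ ^ 2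
    ωstar = 2 * (κ + 1) / (1 + Real.sqrt κ) ^ 2 ∧
      StrictMonoOn (fun x : ℝ => 2 * (x + 1) / (1 + Real.sqrt x) ^ 2) (Set.Ioi 1) ∧
      (10 ≤ κ → 5 / 4 ≤ ωstar) ∧
      (10 ≤ κ → ∀ i, 1 ≤ i → ω i - 1 ∈ Set.Icc (1 / 4 : ℝ) 1) := by
  intro ωstar
  have hκ0 : (0:ℝ) < κ := by linarith
  set s := Real.sqrt κ with hs
  have hs2 : s ^ 2 = κ := Real.sq_sqrt hκ0.le
  have hsnn : 0 ≤ s := Real.sqrt_nonneg κ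
  have hs1 : 1 < s := by nlinarith
  have hρpos : 0 < ρ := by rw [hρ]; exact div_pos (by linarith) (by linarith)
  have hρlt : ρ < 1 := by rw [hρ, div_lt_one (by linarith)]; linarith
  have hsqrt : Real.sqrt (1 - ρ ^ 2) = 2 * s / (κ + 1) := by
    have h1 : 1 - ρ ^ 2 = (2 * s / (κ + 1)) ^ 2 := by
      rw [hρ]; field_simp; nlinarith
    rw [h1, Real.sqrt_sq (by positivity)]
  have heq : ωstar = 2 * (κ + 1) / (1 + s) ^ 2 := by
    show 2 * (1 - Real.sqrt (1 - ρ ^ 2)) / ρ ^ 2 = _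
    rw [hsqrt, hρ, ← hs2]
    have h1 : s ^ 2 - 1 ≠ 0 := by nlinarith
    have h2 : s ^ 2 + 1 ≠ 0 := by positivity
    have h3 : (1 : ℝ) + s ≠ 0 := by positivity
    field_simp
    ring
  refine ⟨heq, ?_, ?_, ?_⟩
  · intro x hx y hy hxy
    simp only [Set.mem_Ioi] at hx hy
    set a := Real.sqrt x with ha
    set b := Real.sqrt y with hb
    have ha2 : a ^ 2 = x := Real.sq_sqrt (by linarith)
    have hb2 : b ^ 2 = y := Real.sq_sqrt (by linarith)
    have hann : 0 ≤ a := Real.sqrt_nonneg x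
    have hbnn : 0 ≤ b := Real.sqrt_nonneg y
    have ha1 : 1 < a := by nlinarith
    have hab : a < b := Real.sqrt_lt_sqrt (by linarith) hxy
    show 2 * (x + 1) / (1 + a) ^ 2 < 2 * (y + 1) / (1 + b) ^ 2
    rw [div_lt_div_iff₀ (by positivity) (by positivity)]
    nlinarith [mul_pos (sub_pos.2 hab) (by nlinarith : (0:ℝ) < a * b - 1)]
  · intro h10
    rw [heq, le_div_iff₀ (by positivity)]
    have h3 : 3 ≤ s := by nlinarith
    nlinarith
  · intro h10 i hi
    have hρ2 : 16 / 25 ≤ ρ ^ 2 := by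
      rw [hρ, div_pow, le_div_iff₀ (by positivity)]
      nlinarith
    have hρ2' : ρ ^ 2 ≤ 1 := by nlinarith
    have key : ∀ j, 5 / 4 ≤ ω j ∧ ω j ≤ 2 := by
      intro j
      induction j with
      | zero => rw [hω0]; norm_num
      | succ n ih =>
        obtain ⟨h1, h2⟩ := ih
        rw [hωrec]
        have hp1 : (0:ℝ) ≤ (1 - ρ ^ 2) * ω n :=
          mul_nonneg (by linarith) (by linarith)
        have hden : (2:ℝ) ≤ 4 - ρ ^ 2 * ω n := by nlinarith [hp1]
        have hp2 : (0:ℝ) ≤ (ρ ^ 2 - 16 / 25) * (ω n - 5 / 4) :=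
          mul_nonneg (by linarith) (by linarith)
        constructor
        · rw [le_div_iff₀ (by linarith)]
          nlinarith [hp2]
        · rw [div_le_iff₀ (by linarith)]
          nlinarith [hp1]
    obtain ⟨h1, h2⟩ := key i
    exact Set.mem_Icc.2 ⟨by linarith, by linarith⟩
end

section
/- The Chebyshev Iteration map is self-adjoint when H is symmetric: let CH_r(H, q) denote the r-th Chebyshev iterate ξ_r with input q. Then for all q, g ∈ ℝ^D, ⟨CH_r(H, q), g⟩ = ⟨q, CH_r(H, g)⟩ in the Euclidean inner product. Consequently, the exact gradient with respect to q of any linear functional q ↦ ⟨g, CH_r(H, q)⟩ equals CH_r(H, g), i.e., the implicit-differentiation gradient obtained by re-running Chebyshev Iteration on the upstream gradient coincides with the true gradient. -/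
open Matrix

/-- Matrix form of the Chebyshev iteration: `ξ q i = chebM ... i *ᵥ q`. -/
noncomputable def chebM (D : ℕ) (H : Matrix (Fin D) (Fin D) ℝ) (c : ℝ) (ω : ℕ → ℝ) :
    ℕ → Matrix (Fin D) (Fin D) ℝ
  | 0 => c • 1
  | 1 => c • (1 : Matrix (Fin D) (Fin D) ℝ)
      - (c * ω 1) • (H * (c • 1) - 1) + (ω 1 - 1) • (c • 1 - 0)
  | (n + 2) => chebM D H c ω (n + 1)
      - (c * ω (n + 2)) • (H * chebM D H c ω (n + 1) - 1)
      + (ω (n + 2) - 1) • (chebM D H c ω (n + 1) - chebM D H c ω n)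

lemma chebM_symm_comm (D : ℕ) (H : Matrix (Fin D) (Fin D) ℝ) (hH : H.IsSymm)
    (c : ℝ) (ω : ℕ → ℝ) :
    ∀ n, (chebM D H c ω n).IsSymm ∧ H * chebM D H c ω n = chebM D H c ω n * H := by
  have hbase : ∀ M : Matrix (Fin D) (Fin D) ℝ, M.IsSymm → H * M = M * H →
      ∀ a b N : Matrix (Fin D) (Fin D) ℝ, N.IsSymm → H * N = N * H →
      ∀ s t : ℝ,
      (M - s • (H * M - 1) + t • (M - N)).IsSymm ∧
        H * (M - s • (H * M - 1) + t • (M - N)) =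
          (M - s • (H * M - 1) + t • (M - N)) * H := by
    intro M hM hMc a b N hN hNc s t
    constructor
    · unfold Matrix.IsSymm at *
      simp [Matrix.transpose_add, Matrix.transpose_sub, Matrix.transpose_smul,
        Matrix.transpose_mul, hM, hN, hH, hMc]
    · simp only [Matrix.mul_add, Matrix.add_mul, Matrix.mul_sub, Matrix.sub_mul,
        Matrix.mul_smul, Matrix.smul_mul, Matrix.mul_one, Matrix.one_mul,
        hMc, hNc, Matrix.mul_assoc]
      rw [← Matrix.mul_assoc H M H, hMc, Matrix.mul_assoc]
  intro n
  induction n using Nat.strong_induction_on with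
  | _ n ih =>
    match n with
    | 0 =>
      constructor
      · unfold Matrix.IsSymm; simp [chebM]
      · simp [chebM, Matrix.mul_smul, Matrix.smul_mul]
    | 1 =>
      have h0 := (ih 0 (by norm_num))
      have := hbase (c • 1) h0.1 h0.2 0 0 0 (by unfold Matrix.IsSymm; simp)
        (by simp) (c * ω 1) (ω 1 - 1)
      simpa [chebM] using this
    | (n + 2) =>
      have h1 := ih (n + 1) (by omega)
      have h0 := ih n (by omega)
      have := hbase (chebM D H c ω (n + 1)) h1.1 h1.2 0 0 (chebM D H c ω n)
        h0.1 h0.2 (c * ω (n + 2)) (ω (n + 2) - 1)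
      simpa [chebM] using this

/-- The Chebyshev Iteration map is self-adjoint when `H` is
symmetric: `⟨CH_r(H, q), g⟩ = ⟨q, CH_r(H, g)⟩` for all `q, g`; consequently the
exact gradient with respect to `q` of the linear functional
`q ↦ ⟨g, CH_r(H, q)⟩` equals `CH_r(H, g)`. -/
theorem chebyshev_self_adjoint_implicit_grad (D : ℕ)
    (H : Matrix (Fin D) (Fin D) ℝ) (hH : H.IsSymm)
    (L μ : ℝ) (hμ : 0 < μ) (hLμ : μ ≤ L)
    (ρ : ℝ) (hρ : ρ = (L - μ) / (L + μ))
    (ω : ℕ → ℝ) (hω0 : ω 0 = 2)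
    (hωrec : ∀ i, ω (i + 1) = 4 / (4 - ρ ^ 2 * ω i))
    (ξ : (Fin D → ℝ) → ℕ → (Fin D → ℝ))
    (hξ0 : ∀ q, ξ q 0 = (2 / (L + μ)) • q)
    (hξ1 : ∀ q, ξ q 1 =
      ξ q 0 - (2 * ω 1 / (L + μ)) • (H *ᵥ ξ q 0 - q) + (ω 1 - 1) • (ξ q 0 - 0))
    (hξrec : ∀ q i, 2 ≤ i → ξ q i =
      ξ q (i - 1) - (2 * ω i / (L + μ)) • (H *ᵥ ξ q (i - 1) - q)
        + (ω i - 1) • (ξ q (i - 1) - ξ q (i - 2)))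
    (r : ℕ) :
    (∀ q g : Fin D → ℝ, ξ q r ⬝ᵥ g = q ⬝ᵥ ξ g r) ∧
      (∀ g : Fin D → ℝ, ∃ Lmap : (Fin D → ℝ) →L[ℝ] ℝ,
        (∀ u, Lmap u = ξ g r ⬝ᵥ u) ∧
          ∀ q₀ : Fin D → ℝ, HasFDerivAt (fun q => g ⬝ᵥ ξ q r) Lmap q₀) := by
  set c : ℝ := 2 / (L + μ) with hc
  set M : ℕ → Matrix (Fin D) (Fin D) ℝ := chebM D H c ω with hM
  -- ξ q n = M n *ᵥ q
  have hmain : ∀ n q, ξ q n = M n *ᵥ q := by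
    intro n
    induction n using Nat.strong_induction_on with
    | _ n ih =>
      match n with
      | 0 =>
        intro q
        rw [hξ0]
        simp [hM, chebM, Matrix.smul_mulVec]
      | 1 =>
        intro q
        rw [hξ1, hξ0]
        have : 2 * ω 1 / (L + μ) = c * ω 1 := by rw [hc]; ring
        rw [this]
        simp [hM, chebM, Matrix.add_mulVec, Matrix.sub_mulVec,
          Matrix.smul_mulVec, Matrix.mulVec_smul, Matrix.mulVec_mulVec]
      | (n + 2) =>
        intro q
        rw [hξrec q (n + 2) (by omega)]
        have e1 : n + 2 - 1 = n + 1 := by omega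
        have e2 : n + 2 - 2 = n := by omega
        rw [e1, e2, ih (n + 1) (by omega), ih n (by omega)]
        have : 2 * ω (n + 2) / (L + μ) = c * ω (n + 2) := by rw [hc]; ring
        rw [this]
        simp [hM, chebM, Matrix.add_mulVec, Matrix.sub_mulVec,
          Matrix.smul_mulVec, Matrix.mulVec_smul, Matrix.mulVec_mulVec]
  have hsymm : (M r).IsSymm := (chebM_symm_comm D H hH c ω r).1
  have hadj : ∀ q g : Fin D → ℝ, ξ q r ⬝ᵥ g = q ⬝ᵥ ξ g r := by
    intro q g
    rw [hmain r q, hmain r g]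
    rw [Matrix.dotProduct_mulVec, ← Matrix.mulVec_transpose, hsymm.eq]
  refine ⟨hadj, fun g => ?_⟩
  let l : (Fin D → ℝ) →ₗ[ℝ] ℝ :=
    { toFun := fun u => ξ g r ⬝ᵥ u
      map_add' := fun x y => by simp [dotProduct_add]
      map_smul' := fun s x => by simp [dotProduct_smul] }
  refine ⟨LinearMap.toContinuousLinearMap l, fun u => rfl, fun q₀ => ?_⟩
  have hfun : (fun q => g ⬝ᵥ ξ q r) = fun q => (LinearMap.toContinuousLinearMap l) q := by
    funext q
    show g ⬝ᵥ ξ q r = ξ g r ⬝ᵥ q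
    rw [dotProduct_comm, hadj q g, dotProduct_comm]
  rw [hfun]
  exact (LinearMap.toContinuousLinearMap l).hasFDerivAt
end

section
/- Intra-chunk decomposition of the backward matrix recursion: define B_i = Σ_{c=i}^C M_{i,c}·w_c·H_c for i = 1, …, C. Then B_i = (Σ_{c=i}^C M_{i,c} w_c ζ_c)·H₀ + Σ_{j=1}^C [M diag(w₁,…,w_C) Mᵀ]_{i,j} · k_j k_jᵀ, where M is the C×C matrix with entries M_{j,c}. -/
open Matrix Finset

/-- Intra-chunk decomposition of the backward matrix
recursion: with `B_i = ∑_{c=i}^C M_{i,c} w_c H_c`, one has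
`B_i = (∑_{c=i}^C M_{i,c} w_c ζ_c) H₀
  + ∑_{j=1}^C [M diag(w) Mᵀ]_{i,j} k_j k_jᵀ`. -/
theorem backward_matrix_recursion_intra_chunk (D C : ℕ)
    (k : ℕ → Fin D → ℝ) (γ : ℕ → ℝ)
    (hγ : ∀ i ∈ Finset.Icc 1 C, 0 < γ i) (w : ℕ → ℝ)
    (H : ℕ → Matrix (Fin D) (Fin D) ℝ) (hH0 : (H 0).IsSymm)
    (hrec : ∀ c, 1 ≤ c → c ≤ C → H c = γ c • H (c - 1) + vecMulVec (k c) (k c)) :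
    let ζ : ℕ → ℝ := fun c => ∏ i ∈ Finset.Icc 1 c, γ i
    let M : ℕ → ℕ → ℝ := fun j c => if j ≤ c then ζ c / ζ j else 0
    let B : ℕ → Matrix (Fin D) (Fin D) ℝ :=
      fun i => ∑ c ∈ Finset.Icc i C, (M i c * w c) • H c
    ∀ i, 1 ≤ i → i ≤ C →
      B i = (∑ c ∈ Finset.Icc i C, M i c * w c * ζ c) • H 0
        + ∑ j ∈ Finset.Icc 1 C,
            (∑ c ∈ Finset.Icc 1 C, M i c * w c * M j c) • vecMulVec (k j) (k j) := by
  intro ζ M B i hi1 hiC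
  have hζpos : ∀ c, c ≤ C → 0 < ζ c := by
    intro c hc
    exact Finset.prod_pos fun x hx => hγ x (Finset.mem_Icc.mpr
      ⟨(Finset.mem_Icc.mp hx).1, le_trans (Finset.mem_Icc.mp hx).2 hc⟩)
  have hH : ∀ c, c ≤ C →
      H c = ζ c • H 0 + ∑ j ∈ Finset.Icc 1 c, M j c • vecMulVec (k j) (k j) := by
    intro c
    induction c with
    | zero => intro _; simp [ζ]
    | succ n ih =>
      intro hc
      have hn : n ≤ C := Nat.le_of_succ_le hc
      have hζs : ζ (n + 1) = γ (n + 1) * ζ n := by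
        simp only [ζ, Finset.prod_Icc_succ_top (Nat.succ_le_succ (Nat.zero_le n))]
        ring
      rw [hrec (n + 1) (Nat.succ_le_succ (Nat.zero_le n)) hc]
      simp only [Nat.add_sub_cancel]
      rw [ih hn, Finset.sum_Icc_succ_top (Nat.succ_le_succ (Nat.zero_le n))]
      have h1 : M (n + 1) (n + 1) = 1 := by
        simp only [M, le_refl, if_true]
        exact div_self (ne_of_gt (hζpos _ hc))
      have hterm : ∀ j ∈ Finset.Icc 1 n,
          γ (n + 1) • (M j n • vecMulVec (k j) (k j))
            = M j (n + 1) • vecMulVec (k j) (k j) := by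
        intro j hj
        have hj' := (Finset.mem_Icc.mp hj).2
        rw [smul_smul]
        congr 1
        simp only [M, if_pos hj', if_pos (hj'.trans (Nat.le_succ n)), hζs]
        ring
      rw [smul_add, Finset.smul_sum, Finset.sum_congr rfl hterm, smul_smul, ← hζs, h1,
        one_smul]
      abel
  show (∑ c ∈ Finset.Icc i C, (M i c * w c) • H c) = _
  have hstep : ∀ c ∈ Finset.Icc i C,
      (M i c * w c) • H c = (M i c * w c * ζ c) • H 0
        + ∑ j ∈ Finset.Icc 1 c, (M i c * w c * M j c) • vecMulVec (k j) (k j) := by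
    intro c hc
    rw [hH c (Finset.mem_Icc.mp hc).2, smul_add, smul_smul, Finset.smul_sum]
    simp only [smul_smul]
  rw [Finset.sum_congr rfl hstep, Finset.sum_add_distrib, ← Finset.sum_smul]
  congr 1
  have hinner : ∀ c ∈ Finset.Icc i C,
      (∑ j ∈ Finset.Icc 1 c, (M i c * w c * M j c) • vecMulVec (k j) (k j))
        = ∑ j ∈ Finset.Icc 1 C, (M i c * w c * M j c) • vecMulVec (k j) (k j) := by
    intro c hc
    have hcC := (Finset.mem_Icc.mp hc).2
    refine Finset.sum_subset (Finset.Icc_subset_Icc_right hcC) ?_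
    intro j hj hj2
    have : ¬ j ≤ c := by
      intro h
      exact hj2 (Finset.mem_Icc.mpr ⟨(Finset.mem_Icc.mp hj).1, h⟩)
    simp [M, this]
  rw [Finset.sum_congr rfl hinner]
  rw [Finset.sum_subset (Finset.Icc_subset_Icc_left hi1)
    (fun c hc hc2 => by
      have : ¬ i ≤ c := by
        intro h
        exact hc2 (Finset.mem_Icc.mpr ⟨h, (Finset.mem_Icc.mp hc).2⟩)
      simp [M, this])]
  rw [Finset.sum_comm]
  exact Finset.sum_congr rfl fun j _ => (Finset.sum_smul ..).symm
end

section
/- Gradient with respect to a key through the adaptively regularized solves (Lemma 1): fix an index i, gates and masks as below, and vectors q_t, g_t ∈ ℝ^D for t = i, …, T. For k ∈ ℝ^D, let H_t(k) = Σ_{j=1}^t M_{j,t}·k_j k_jᵀ with the i-th key k_i replaced by the variable k, let λ_t(k) = a·‖H_t(k)‖_F, and define the scalar function L(k) = Σ_{t=i}^T ⟨g_t, (H_t(k) + λ_t(k) I)⁻¹ q_t⟩. If at the point k₀ every H_t(k₀) (t ≥ i) is nonzero (so that H_t(k₀) + λ_t(k₀)I is positive definite), then L is differentiable at k₀ with gradient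 ∇L(k₀) = Σ_{t=i}^T M_{i,t} · ( −dq_t x_tᵀ − x_t dq_tᵀ − w_t H_t(k₀) ) · k₀, where x_t = (H_t(k₀) + λ_t(k₀)I)⁻¹ q_t, dq_t = (H_t(k₀) + λ_t(k₀)I)⁻¹ g_t, and w_t = 2a·⟨x_t, dq_t⟩ / ‖H_t(k₀)‖_F. -/
open Matrix Finset

/-- The Frobenius norm of a real `D × D` matrix. -/
noncomputable def frobNorm {D : ℕ} (A : Matrix (Fin D) (Fin D) ℝ) : ℝ :=
  Real.sqrt (∑ i, ∑ j, (A i j) ^ 2)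

attribute [local instance] Matrix.linftyOpNormedAddCommGroup Matrix.linftyOpNormedSpace
  Matrix.linftyOpNormedRing Matrix.linftyOpNormedAlgebra

namespace GradAux

variable {D : ℕ}

noncomputable def dotCLM (v : Fin D → ℝ) : (Fin D → ℝ) →L[ℝ] ℝ :=
  LinearMap.toContinuousLinearMap
    { toFun := fun u => v ⬝ᵥ u
      map_add' := fun u w => dotProduct_add v u w
      map_smul' := fun c u => by simp [dotProduct_smul] }

@[simp] lemma dotCLM_apply (v u : Fin D → ℝ) : dotCLM v u = v ⬝ᵥ u := rfl

noncomputable def entryCLM (p r : Fin D) : Matrix (Fin D) (Fin D) ℝ →L[ℝ] ℝ :=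
  LinearMap.toContinuousLinearMap
    { toFun := fun B => B p r, map_add' := fun _ _ => rfl, map_smul' := fun _ _ => rfl }

@[simp] lemma entryCLM_apply (p r : Fin D) (B : Matrix (Fin D) (Fin D) ℝ) :
    entryCLM p r B = B p r := rfl

noncomputable def quadCLM (g q : Fin D → ℝ) : Matrix (Fin D) (Fin D) ℝ →L[ℝ] ℝ :=
  LinearMap.toContinuousLinearMap
    { toFun := fun B => g ⬝ᵥ (B *ᵥ q)
      map_add' := fun B1 B2 => by simp [Matrix.add_mulVec, dotProduct_add]
      map_smul' := fun c B => by
        simp [Matrix.smul_mulVec, dotProduct_smul] }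

@[simp] lemma quadCLM_apply (g q : Fin D → ℝ) (B : Matrix (Fin D) (Fin D) ℝ) :
    quadCLM g q B = g ⬝ᵥ (B *ᵥ q) := rfl

noncomputable def vmvL : (Fin D → ℝ) →L[ℝ] (Fin D → ℝ) →L[ℝ] Matrix (Fin D) (Fin D) ℝ :=
  LinearMap.toContinuousLinearMap
  { toFun := fun v => LinearMap.toContinuousLinearMap
      { toFun := fun w => vecMulVec v w
        map_add' := fun w1 w2 => by
          ext p r; simp [Matrix.vecMulVec_apply, mul_add]
        map_smul' := fun c w => by
          ext p r; simp [Matrix.vecMulVec_apply]; ring }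
    map_add' := fun v1 v2 => by
      ext w p r; simp [Matrix.vecMulVec_apply, add_mul]
    map_smul' := fun c v => by
      ext w p r; simp [Matrix.vecMulVec_apply] }

@[simp] lemma vmvL_apply (v w : Fin D → ℝ) : vmvL v w = vecMulVec v w := rfl

lemma vmv_mulVec (v w x : Fin D → ℝ) : vecMulVec v w *ᵥ x = (w ⬝ᵥ x) • v := by
  funext p
  simp only [Matrix.mulVec, dotProduct, Matrix.vecMulVec_apply, Pi.smul_apply,
    smul_eq_mul, Finset.sum_mul]
  exact Finset.sum_congr rfl fun j _ => by ring

lemma psd_smul_vmv {m : ℝ} (hm : 0 ≤ m) (v : Fin D → ℝ) :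
    (m • vecMulVec v v).PosSemidef := by
  rw [Matrix.posSemidef_iff_dotProduct_mulVec]
  constructor
  · ext p r
    simp [Matrix.conjTranspose_apply, Matrix.vecMulVec_apply, mul_comm]
  · intro x
    have : star x ⬝ᵥ ((m • vecMulVec v v) *ᵥ x) = m * (v ⬝ᵥ x) ^ 2 := by
      rw [Matrix.smul_mulVec, dotProduct_smul, vmv_mulVec,
        dotProduct_smul]
      simp only [star_trivial, smul_eq_mul]
      rw [dotProduct_comm x v]
      ring
    rw [this]
    positivity


lemma aux (a m : ℝ) (ha : 0 < a) (hm : 0 ≤ m)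
    (C : Matrix (Fin D) (Fin D) ℝ) (hC : C.PosSemidef)
    (q g k₀ : Fin D → ℝ)
    (H : (Fin D → ℝ) → Matrix (Fin D) (Fin D) ℝ)
    (hHdef : ∀ kv, H kv = m • vecMulVec kv kv + C)
    (hH0 : H k₀ ≠ 0)
    (x dq : Fin D → ℝ) (w : ℝ)
    (hx : x = (H k₀ + (a * frobNorm (H k₀)) • 1)⁻¹ *ᵥ q)
    (hdq : dq = (H k₀ + (a * frobNorm (H k₀)) • 1)⁻¹ *ᵥ g)
    (hw : w = 2 * a * (x ⬝ᵥ dq) / frobNorm (H k₀)) :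
    HasFDerivAt (fun kv => g ⬝ᵥ ((H kv + (a * frobNorm (H kv)) • 1)⁻¹ *ᵥ q))
      (dotCLM (m • ((-(vecMulVec dq x) - vecMulVec x dq - w • H k₀) *ᵥ k₀))) k₀ := by
  -- basic positivity facts
  have hPSD : (H k₀).PosSemidef := by
    rw [hHdef]; exact (psd_smul_vmv hm k₀).add hC
  have hsym : (H k₀)ᵀ = H k₀ := by
    have h := hPSD.isHermitian
    rwa [Matrix.IsHermitian, Matrix.conjTranspose_eq_transpose_of_trivial] at h
  set S : (Fin D → ℝ) → ℝ := fun kv => ∑ p, ∑ r, (H kv p r) ^ 2 with hS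
  have hfrob : ∀ kv, frobNorm (H kv) = Real.sqrt (S kv) := fun kv => rfl
  have hSpos : 0 < S k₀ := by
    obtain ⟨p, r, hpr⟩ : ∃ p r, H k₀ p r ≠ 0 := by
      by_contra hcon
      push_neg at hcon
      exact hH0 (Matrix.ext fun p r => hcon p r)
    refine Finset.sum_pos' (fun p _ => Finset.sum_nonneg fun r _ => sq_nonneg _) ⟨p, Finset.mem_univ _, ?_⟩
    refine Finset.sum_pos' (fun r _ => sq_nonneg _) ⟨r, Finset.mem_univ _, ?_⟩
    positivity
  have hnpos : 0 < frobNorm (H k₀) := by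
    rw [hfrob]; exact Real.sqrt_pos.2 hSpos
  -- the base matrix is positive definite, hence a unit
  set A₀ : Matrix (Fin D) (Fin D) ℝ := H k₀ + (a * frobNorm (H k₀)) • 1 with hA₀
  have hA₀pd : A₀.PosDef := by
    refine Matrix.PosDef.posSemidef_add hPSD ?_
    rw [Matrix.smul_one_eq_diagonal]
    exact Matrix.PosDef.diagonal fun _ => by positivity
  have hA₀unit : IsUnit A₀ := hA₀pd.isUnit
  have hA₀sym : A₀ᵀ = A₀ := by
    rw [hA₀, Matrix.transpose_add, hsym, Matrix.transpose_smul, Matrix.transpose_one]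
  -- derivative of H
  set Hd : (Fin D → ℝ) →L[ℝ] Matrix (Fin D) (Fin D) ℝ :=
    m • (((vmvL (D := D)).isBoundedBilinearMap.deriv (k₀, k₀)).comp
      ((ContinuousLinearMap.id ℝ (Fin D → ℝ)).prod (ContinuousLinearMap.id ℝ (Fin D → ℝ))))
    with hHdDef
  have hHd : HasFDerivAt H Hd k₀ := by
    have hdiag : HasFDerivAt (fun kv : Fin D → ℝ => (kv, kv))
        ((ContinuousLinearMap.id ℝ (Fin D → ℝ)).prod (ContinuousLinearMap.id ℝ (Fin D → ℝ))) k₀ :=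
      (hasFDerivAt_id k₀).prodMk (hasFDerivAt_id k₀)
    have hbil : HasFDerivAt (fun kv : Fin D → ℝ => vecMulVec kv kv)
        (((vmvL (D := D)).isBoundedBilinearMap.deriv (k₀, k₀)).comp
          ((ContinuousLinearMap.id ℝ (Fin D → ℝ)).prod (ContinuousLinearMap.id ℝ (Fin D → ℝ)))) k₀ :=
      HasFDerivAt.comp (f := fun kv : Fin D → ℝ => (kv, kv)) (g := fun p : (Fin D → ℝ) × (Fin D → ℝ) => vecMulVec p.1 p.2) k₀
        ((vmvL (D := D)).isBoundedBilinearMap.hasFDerivAt (k₀, k₀)) hdiag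
    rw [show H = (fun kv => m • vecMulVec kv kv + C) from funext hHdef]
    exact (hbil.const_smul m).add_const C
  have hHdapp : ∀ u, Hd u = m • (vecMulVec k₀ u + vecMulVec u k₀) := by
    intro u
    rfl
  -- derivative of S
  set Sd : (Fin D → ℝ) →L[ℝ] ℝ :=
    ∑ p : Fin D, ∑ r : Fin D, (((2 : ℕ) : ℝ) * H k₀ p r ^ 1) • ((entryCLM p r).comp Hd)
    with hSdDef
  have hSd : HasFDerivAt S Sd k₀ := by
    refine HasFDerivAt.fun_sum fun p _ => HasFDerivAt.fun_sum fun r _ => ?_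
    exact (hasDerivAt_pow 2 (H k₀ p r)).comp_hasFDerivAt k₀
      ((entryCLM p r).hasFDerivAt.comp k₀ hHd)
  -- derivative of lam
  have hlam : HasFDerivAt (fun kv => a * frobNorm (H kv))
      (a • ((1 / (2 * Real.sqrt (S k₀))) • Sd)) k₀ := by
    have h1 : HasFDerivAt (fun kv => Real.sqrt (S kv)) ((1 / (2 * Real.sqrt (S k₀))) • Sd) k₀ :=
      hSd.sqrt hSpos.ne'
    exact h1.const_mul a
  -- derivative of A
  set Ad : (Fin D → ℝ) →L[ℝ] Matrix (Fin D) (Fin D) ℝ :=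
    Hd + (a • ((1 / (2 * Real.sqrt (S k₀))) • Sd)).smulRight (1 : Matrix (Fin D) (Fin D) ℝ)
    with hAdDef
  have hAfun : HasFDerivAt
      (fun kv => H kv + (a * frobNorm (H kv)) • (1 : Matrix (Fin D) (Fin D) ℝ)) Ad k₀ := by
    have h2 : HasFDerivAt
        (fun kv => (a * frobNorm (H kv)) • (1 : Matrix (Fin D) (Fin D) ℝ))
        ((a • ((1 / (2 * Real.sqrt (S k₀))) • Sd)).smulRight (1 : Matrix (Fin D) (Fin D) ℝ)) k₀ := by
      have := hlam.smul_const (1 : Matrix (Fin D) (Fin D) ℝ)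
      exact this
    exact hHd.add h2
  -- derivative of the inverse
  have hinv : HasFDerivAt
      (fun kv => (H kv + (a * frobNorm (H kv)) • (1 : Matrix (Fin D) (Fin D) ℝ))⁻¹)
      ((-(ContinuousLinearMap.mulLeftRight ℝ _ A₀⁻¹ A₀⁻¹)).comp Ad) k₀ := by
    have hR : HasFDerivAt Ring.inverse
        (-(ContinuousLinearMap.mulLeftRight ℝ (Matrix (Fin D) (Fin D) ℝ) A₀⁻¹ A₀⁻¹)) A₀ := by
      have h := hasFDerivAt_ringInverse (𝕜 := ℝ) hA₀unit.unit
      rwa [Matrix.coe_units_inv, IsUnit.unit_spec] at h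
    have hcomp := HasFDerivAt.comp (g := (Ring.inverse : Matrix (Fin D) (Fin D) ℝ → _)) k₀ hR hAfun
    have hfun : (fun kv => (H kv + (a * frobNorm (H kv)) • (1 : Matrix (Fin D) (Fin D) ℝ))⁻¹)
        = (Ring.inverse ∘ fun kv => H kv + (a * frobNorm (H kv)) • (1 : Matrix (Fin D) (Fin D) ℝ)) := by
      funext kv; exact Matrix.nonsing_inv_eq_ringInverse _
    rw [hfun]; exact hcomp
  have hfinal : HasFDerivAt (fun kv => g ⬝ᵥ ((H kv + (a * frobNorm (H kv)) • 1)⁻¹ *ᵥ q))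
      ((quadCLM g q).comp ((-(ContinuousLinearMap.mulLeftRight ℝ _ A₀⁻¹ A₀⁻¹)).comp Ad)) k₀ :=
    (quadCLM g q).hasFDerivAt.comp k₀ hinv
  have heq : (quadCLM g q).comp
        ((-(ContinuousLinearMap.mulLeftRight ℝ (Matrix (Fin D) (Fin D) ℝ) A₀⁻¹ A₀⁻¹)).comp Ad)
      = dotCLM (m • ((-(vecMulVec dq x) - vecMulVec x dq - w • H k₀) *ᵥ k₀)) := by
    ext u
    have hpr : ∀ p r : Fin D, H k₀ p r = H k₀ r p := fun p r => (congrFun (congrFun hsym r) p).symm ▸ rfl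
    have hsymdot : ∀ v z : Fin D → ℝ, (H k₀ *ᵥ v) ⬝ᵥ z = v ⬝ᵥ (H k₀ *ᵥ z) := by
      intro v z
      rw [dotProduct_mulVec, ← Matrix.mulVec_transpose, hsym]
    have hT : ∀ (v z : Fin D → ℝ), (∑ p, ∑ r, H k₀ p r * (v p * z r)) = (H k₀ *ᵥ v) ⬝ᵥ z := by
      intro v z
      rw [Finset.sum_comm]
      simp only [dotProduct, Matrix.mulVec, Finset.sum_mul]
      refine Finset.sum_congr rfl fun r _ => Finset.sum_congr rfl fun p _ => ?_
      rw [hpr p r]; ring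
    have hSdu : Sd u = 4 * m * ((H k₀ *ᵥ k₀) ⬝ᵥ u) := by
      have h1 : Sd u = ∑ p, ∑ r, (((2 : ℕ) : ℝ) * H k₀ p r ^ 1) * (Hd u p r) := by
        simp [hSdDef]
      have h2 : ∀ p r : Fin D, Hd u p r = m * (k₀ p * u r + u p * k₀ r) := by
        intro p r
        rw [hHdapp u]
        simp [Matrix.vecMulVec_apply, mul_add]
      calc Sd u = ∑ p, ∑ r, (2 * H k₀ p r) * (m * (k₀ p * u r + u p * k₀ r)) := by
            rw [h1]
            exact Finset.sum_congr rfl fun p _ => Finset.sum_congr rfl fun r _ => by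
              rw [h2]; push_cast; ring
        _ = 2 * m * (∑ p, ∑ r, H k₀ p r * (k₀ p * u r))
            + 2 * m * (∑ p, ∑ r, H k₀ p r * (u p * k₀ r)) := by
            simp only [Finset.mul_sum, ← Finset.sum_add_distrib]
            exact Finset.sum_congr rfl fun p _ => Finset.sum_congr rfl fun r _ => by ring
        _ = 2 * m * ((H k₀ *ᵥ k₀) ⬝ᵥ u) + 2 * m * ((H k₀ *ᵥ u) ⬝ᵥ k₀) := by rw [hT, hT]
        _ = 4 * m * ((H k₀ *ᵥ k₀) ⬝ᵥ u) := by
            rw [hsymdot u k₀, dotProduct_comm u (H k₀ *ᵥ k₀)]; ring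
    have hAdu : Ad u = m • (vecMulVec k₀ u + vecMulVec u k₀)
        + (a * ((1 / (2 * Real.sqrt (S k₀))) * Sd u)) • (1 : Matrix (Fin D) (Fin D) ℝ) := by
      rw [hAdDef]
      simp [smul_smul, hHdapp u]
      rw [mul_assoc]
    have hNg : ∀ y : Fin D → ℝ, g ⬝ᵥ (A₀⁻¹ *ᵥ y) = dq ⬝ᵥ y := by
      intro y
      rw [dotProduct_mulVec, hdq]
      congr 1
      rw [← Matrix.mulVec_transpose, Matrix.transpose_nonsing_inv, hA₀sym]
    have lhs1 : (quadCLM g q).comp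
        ((-(ContinuousLinearMap.mulLeftRight ℝ (Matrix (Fin D) (Fin D) ℝ) A₀⁻¹ A₀⁻¹)).comp Ad) u
        = -(dq ⬝ᵥ (Ad u *ᵥ x)) := by
      show g ⬝ᵥ ((-(A₀⁻¹ * Ad u * A₀⁻¹)) *ᵥ q) = _
      rw [Matrix.neg_mulVec, dotProduct_neg, ← Matrix.mulVec_mulVec,
        ← Matrix.mulVec_mulVec, hNg, ← hx]
    have hAdux : dq ⬝ᵥ (Ad u *ᵥ x) = m * ((u ⬝ᵥ x) * (dq ⬝ᵥ k₀) + (k₀ ⬝ᵥ x) * (dq ⬝ᵥ u))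
        + (a * ((1 / (2 * Real.sqrt (S k₀))) * Sd u)) * (dq ⬝ᵥ x) := by
      simp only [hAdu, Matrix.add_mulVec, Matrix.smul_mulVec, vmv_mulVec,
        Matrix.one_mulVec, dotProduct_add, dotProduct_smul, smul_eq_mul]
      try ring
    have hvec : (-(vecMulVec dq x) - vecMulVec x dq - w • H k₀) *ᵥ k₀
        = -((x ⬝ᵥ k₀) • dq) - (dq ⬝ᵥ k₀) • x - w • (H k₀ *ᵥ k₀) := by
      rw [Matrix.sub_mulVec, Matrix.sub_mulVec, Matrix.neg_mulVec, vmv_mulVec, vmv_mulVec,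
        Matrix.smul_mulVec]
    have rhs1 : dotCLM (m • ((-(vecMulVec dq x) - vecMulVec x dq - w • H k₀) *ᵥ k₀)) u
        = m * (-((x ⬝ᵥ k₀) * (dq ⬝ᵥ u)) - (dq ⬝ᵥ k₀) * (x ⬝ᵥ u) - w * ((H k₀ *ᵥ k₀) ⬝ᵥ u)) := by
      rw [dotCLM_apply, hvec]
      simp only [smul_dotProduct, sub_dotProduct, neg_dotProduct,
        smul_dotProduct, smul_eq_mul]
      try ring
    rw [lhs1, rhs1, hAdux, hSdu, hw, hfrob k₀,
      dotProduct_comm u x, dotProduct_comm k₀ x, dotProduct_comm dq x]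
    rw [div_eq_mul_inv, div_eq_mul_inv, mul_inv]
    ring
  rw [← heq]
  exact hfinal

lemma sum_dotProduct' (s : Finset ℕ) (v : ℕ → Fin D → ℝ) (u : Fin D → ℝ) :
    (∑ t ∈ s, v t) ⬝ᵥ u = ∑ t ∈ s, v t ⬝ᵥ u := by
  simp only [dotProduct, Finset.sum_apply, Finset.sum_mul]
  rw [Finset.sum_comm]

end GradAux

/-- **Lemma 1.** Gradient with respect to the `i`-th key through
the adaptively regularized solves: with `H_t(k) = ∑_{j≤t} M_{j,t} k_j k_jᵀ`
(`k_i` replaced by the variable `k`), `λ_t(k) = a‖H_t(k)‖_F` and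
`L(k) = ∑_{t=i}^T ⟨g_t, (H_t(k) + λ_t(k) I)⁻¹ q_t⟩`, if every `H_t(k₀)` is
nonzero then `L` is differentiable at `k₀` with gradient
`∇L(k₀) = ∑_{t≥i} M_{i,t}(−dq_t x_tᵀ − x_t dq_tᵀ − w_t H_t(k₀)) k₀`, where
`x_t = (H_t+λ_tI)⁻¹q_t`, `dq_t = (H_t+λ_tI)⁻¹g_t`,
`w_t = 2a⟨x_t, dq_t⟩/‖H_t(k₀)‖_F`. -/
theorem grad_key_adaptive_regularized_solves (D T i : ℕ) (hi1 : 1 ≤ i) (hiT : i ≤ T)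
    (a : ℝ) (ha : 0 < a)
    (k : ℕ → Fin D → ℝ) (γ : ℕ → ℝ) (hγ : ∀ j ∈ Finset.Icc 1 T, 0 < γ j)
    (q g : ℕ → Fin D → ℝ) (k₀ : Fin D → ℝ) :
    let ζ : ℕ → ℝ := fun t => ∏ j ∈ Finset.Icc 1 t, γ j
    let M : ℕ → ℕ → ℝ := fun j t => if j ≤ t then ζ t / ζ j else 0
    let key : (Fin D → ℝ) → ℕ → (Fin D → ℝ) := fun kv j => if j = i then kv else k j
    let H : ℕ → (Fin D → ℝ) → Matrix (Fin D) (Fin D) ℝ :=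
      fun t kv => ∑ j ∈ Finset.Icc 1 t, M j t • vecMulVec (key kv j) (key kv j)
    let lam : ℕ → (Fin D → ℝ) → ℝ := fun t kv => a * frobNorm (H t kv)
    let Lfun : (Fin D → ℝ) → ℝ := fun kv =>
      ∑ t ∈ Finset.Icc i T, g t ⬝ᵥ ((H t kv + lam t kv • 1)⁻¹ *ᵥ q t)
    let x : ℕ → Fin D → ℝ := fun t => (H t k₀ + lam t k₀ • 1)⁻¹ *ᵥ q t
    let dq : ℕ → Fin D → ℝ := fun t => (H t k₀ + lam t k₀ • 1)⁻¹ *ᵥ g t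
    let w : ℕ → ℝ := fun t => 2 * a * (x t ⬝ᵥ dq t) / frobNorm (H t k₀)
    let grad : Fin D → ℝ := ∑ t ∈ Finset.Icc i T,
      M i t • ((-(vecMulVec (dq t) (x t)) - vecMulVec (x t) (dq t) - w t • H t k₀) *ᵥ k₀)
    (∀ t ∈ Finset.Icc i T, H t k₀ ≠ 0) →
      ∃ Lmap : (Fin D → ℝ) →L[ℝ] ℝ,
        (∀ u, Lmap u = grad ⬝ᵥ u) ∧ HasFDerivAt Lfun Lmap k₀ := by
  intro ζ M key H lam Lfun x dq w grad hH
  classical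
  have hζpos : ∀ t, t ≤ T → 0 < ζ t := fun t ht =>
    Finset.prod_pos fun j hj => hγ j (Finset.mem_Icc.mpr
      ⟨(Finset.mem_Icc.mp hj).1, le_trans (Finset.mem_Icc.mp hj).2 ht⟩)
  have hM : ∀ j t, j ≤ t → t ≤ T → 0 < M j t := by
    intro j t hjt htT
    show 0 < if j ≤ t then ζ t / ζ j else 0
    rw [if_pos hjt]
    exact div_pos (hζpos t htT) (hζpos j (le_trans hjt htT))
  have main : ∀ t ∈ Finset.Icc i T, HasFDerivAt
      (fun kv => g t ⬝ᵥ ((H t kv + lam t kv • 1)⁻¹ *ᵥ q t))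
      (GradAux.dotCLM (M i t •
        ((-(vecMulVec (dq t) (x t)) - vecMulVec (x t) (dq t) - w t • H t k₀) *ᵥ k₀))) k₀ := by
    intro t ht
    obtain ⟨hit, htT⟩ := Finset.mem_Icc.mp ht
    have hiIcc : i ∈ Finset.Icc 1 t := Finset.mem_Icc.mpr ⟨hi1, hit⟩
    set C : Matrix (Fin D) (Fin D) ℝ :=
      ∑ j ∈ (Finset.Icc 1 t).erase i, M j t • vecMulVec (k j) (k j) with hCdef
    have hC : C.PosSemidef := by
      rw [hCdef]
      refine Finset.sum_induction _ _ (fun A B hA hB => hA.add hB) Matrix.PosSemidef.zero ?_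
      intro j hj
      have hj' := Finset.mem_Icc.mp (Finset.mem_of_mem_erase hj)
      exact GradAux.psd_smul_vmv (le_of_lt (hM j t hj'.2 htT)) (k j)
    have hHdef : ∀ kv, H t kv = M i t • vecMulVec kv kv + C := by
      intro kv
      show (∑ j ∈ Finset.Icc 1 t, M j t • vecMulVec (key kv j) (key kv j)) = _
      rw [← Finset.add_sum_erase _ _ hiIcc]
      congr 1
      · show M i t • vecMulVec (if i = i then kv else k i) (if i = i then kv else k i) = _
        rw [if_pos rfl]
      · refine Finset.sum_congr rfl fun j hj => ?_
        have hji : j ≠ i := Finset.ne_of_mem_erase hj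
        show M j t • vecMulVec (if j = i then kv else k j) (if j = i then kv else k j) = _
        rw [if_neg hji]
    exact GradAux.aux a (M i t) ha (le_of_lt (hM i t hit htT)) C hC (q t) (g t) k₀
      (fun kv => H t kv) hHdef (hH t ht) (x t) (dq t) (w t) rfl rfl rfl
  refine ⟨∑ t ∈ Finset.Icc i T, GradAux.dotCLM (M i t •
      ((-(vecMulVec (dq t) (x t)) - vecMulVec (x t) (dq t) - w t • H t k₀) *ᵥ k₀)), ?_, ?_⟩
  · intro u
    rw [ContinuousLinearMap.sum_apply]
    show _ = (∑ t ∈ Finset.Icc i T, M i t •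
      ((-(vecMulVec (dq t) (x t)) - vecMulVec (x t) (dq t) - w t • H t k₀) *ᵥ k₀)) ⬝ᵥ u
    rw [GradAux.sum_dotProduct']
    exact Finset.sum_congr rfl fun t _ => GradAux.dotCLM_apply _ _
  · exact HasFDerivAt.fun_sum main
end
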